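/- Let S be a symmetric invertible 2×2 complex matrix, set B = w·S, and let N be the 4×4 block matrix [[0, B],[0, 0]]. Then the linear map sending a 2×2 complex matrix A to the commutator N·X_A − X_A·N, where X_A is the block-diagonal matrix [[A, 0],[0, −w·Aᵀ·w]] ∈ sp(4,ℂ), takes values in the 3-dimensional space of matrices of the form [[0, Y],[0, 0]] with w·Y symmetric, and it is surjective onto that space. -/
import Mathlib

open Matrix

/-- The matrix `J` defining the symplectic form. -/
def J4 : Matrix (Fin 4) (Fin 4) ℂ :=
  !![0,0,0,1; 0,0,1,0; 0,-1,0,0; -1,0,0,0]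

/-- The set `sp(4,ℂ) = {X : Xᵀ·J + J·X = 0}`. -/
def sp4 : Set (Matrix (Fin 4) (Fin 4) ℂ) :=
  {X | Xᵀ * J4 + J4 * X = 0}

/-- The 2×2 matrix `w = [[0,1],[1,0]]`. -/
def w2 : Matrix (Fin 2) (Fin 2) ℂ := !![0,1; 1,0]

/-- The 4×4 matrix with 2×2 blocks `[[A,B],[C,D]]`. -/
def blk (A B C D : Matrix (Fin 2) (Fin 2) ℂ) : Matrix (Fin 4) (Fin 4) ℂ :=
  Matrix.reindex finSumFinEquiv finSumFinEquiv (Matrix.fromBlocks A B C D)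

lemma blk_mul (A B C D A' B' C' D' : Matrix (Fin 2) (Fin 2) ℂ) :
    blk A B C D * blk A' B' C' D' =
      blk (A*A'+B*C') (A*B'+B*D') (C*A'+D*C') (C*B'+D*D') := by
  unfold blk
  rw [reindex_apply, reindex_apply, reindex_apply, submatrix_mul_equiv,
    fromBlocks_multiply]

lemma blk_transpose (A B C D : Matrix (Fin 2) (Fin 2) ℂ) :
    (blk A B C D)ᵀ = blk Aᵀ Cᵀ Bᵀ Dᵀ := by
  unfold blk
  simp [reindex_apply, transpose_submatrix, fromBlocks_transpose]

lemma blk_add (A B C D A' B' C' D' : Matrix (Fin 2) (Fin 2) ℂ) :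
    blk A B C D + blk A' B' C' D' = blk (A+A') (B+B') (C+C') (D+D') := by
  unfold blk; ext i j
  simp [reindex_apply, submatrix_apply, ← fromBlocks_add, Matrix.add_apply]

lemma blk_neg (A B C D : Matrix (Fin 2) (Fin 2) ℂ) :
    -blk A B C D = blk (-A) (-B) (-C) (-D) := by
  unfold blk; ext i j
  simp [reindex_apply, submatrix_apply, ← fromBlocks_neg, Matrix.neg_apply]

lemma blk_sub (A B C D A' B' C' D' : Matrix (Fin 2) (Fin 2) ℂ) :
    blk A B C D - blk A' B' C' D' = blk (A-A') (B-B') (C-C') (D-D') := by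
  rw [sub_eq_add_neg, blk_neg, blk_add]
  simp [sub_eq_add_neg]

lemma blk_zero : blk 0 0 0 0 = 0 := by
  unfold blk; simp

lemma blk_congr {A B C D A' B' C' D' : Matrix (Fin 2) (Fin 2) ℂ}
    (h1 : A = A') (h2 : B = B') (h3 : C = C') (h4 : D = D') :
    blk A B C D = blk A' B' C' D' := by rw [h1, h2, h3, h4]

lemma J4_blk : J4 = blk 0 w2 (-w2) 0 := by
  unfold J4 blk w2
  ext i j
  fin_cases i <;> fin_cases j <;>
    simp [reindex_apply, submatrix_apply, finSumFinEquiv, fromBlocks] <;> rfl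

lemma w2t : w2ᵀ = w2 := by
  unfold w2; ext i j; fin_cases i <;> fin_cases j <;> rfl

lemma w2w2 : w2 * w2 = 1 := by
  unfold w2; ext i j; fin_cases i <;> fin_cases j <;>
    simp [Matrix.mul_apply, Fin.sum_univ_succ]

lemma w2w2' (X : Matrix (Fin 2) (Fin 2) ℂ) : w2 * (w2 * X) = X := by
  rw [← Matrix.mul_assoc, w2w2, Matrix.one_mul]

noncomputable def f2 : Matrix (Fin 2) (Fin 2) ℂ →ₗ[ℂ] ℂ where
  toFun Y := Y 0 0 - Y 1 1
  map_add' X Y := by simp [Matrix.add_apply]; ring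
  map_smul' c Y := by simp [Matrix.smul_apply]; ring

lemma setEq : {Y : Matrix (Fin 2) (Fin 2) ℂ | (w2 * Y)ᵀ = w2 * Y} = ↑(LinearMap.ker f2) := by
  ext Y
  simp only [Set.mem_setOf_eq, SetLike.mem_coe, LinearMap.mem_ker]
  constructor
  · intro h
    have := congrFun (congrFun h 0) 1
    simp [w2, f2, Matrix.mul_apply, Fin.sum_univ_succ, Matrix.vecMul,
      dotProduct, transpose_apply] at this ⊢
    linear_combination this
  · intro h
    simp only [f2, LinearMap.coe_mk, AddHom.coe_mk, sub_eq_zero] at h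
    ext i j
    fin_cases i <;> fin_cases j <;>
      simp [w2, Matrix.mul_apply, Fin.sum_univ_succ, Matrix.vecMul,
        dotProduct, transpose_apply, h]

lemma dim3 : Module.finrank ℂ ↥(Submodule.span ℂ
    {Y : Matrix (Fin 2) (Fin 2) ℂ | (w2 * Y)ᵀ = w2 * Y}) = 3 := by
  rw [setEq, Submodule.span_eq]
  have hsurj : LinearMap.range f2 = ⊤ := by
    rw [LinearMap.range_eq_top]
    intro c
    exact ⟨!![c,0;0,0], by simp [f2]⟩
  have := LinearMap.finrank_range_add_finrank_ker f2
  rw [hsurj] at this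
  simp only [finrank_top, Module.finrank_self] at this
  rw [Module.finrank_matrix] at this
  simp at this
  omega

theorem stmt16 (S : Matrix (Fin 2) (Fin 2) ℂ) (hS : Sᵀ = S) (hS' : IsUnit S.det) :
    let B : Matrix (Fin 2) (Fin 2) ℂ := w2 * S
    let N : Matrix (Fin 4) (Fin 4) ℂ := blk 0 B 0 0
    let XA : Matrix (Fin 2) (Fin 2) ℂ → Matrix (Fin 4) (Fin 4) ℂ :=
      fun A => blk A 0 0 (-(w2 * Aᵀ * w2))
    (∀ A : Matrix (Fin 2) (Fin 2) ℂ, XA A ∈ sp4) ∧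
    (∀ A : Matrix (Fin 2) (Fin 2) ℂ, ∃ Y : Matrix (Fin 2) (Fin 2) ℂ,
      (w2 * Y)ᵀ = w2 * Y ∧ N * XA A - XA A * N = blk 0 Y 0 0) ∧
    (∀ Y : Matrix (Fin 2) (Fin 2) ℂ, (w2 * Y)ᵀ = w2 * Y →
      ∃ A : Matrix (Fin 2) (Fin 2) ℂ, N * XA A - XA A * N = blk 0 Y 0 0) ∧
    Module.finrank ℂ ↥(Submodule.span ℂ
      {Y : Matrix (Fin 2) (Fin 2) ℂ | (w2 * Y)ᵀ = w2 * Y}) = 3 := by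
  intro B N XA
  have hinv : S⁻¹ * S = 1 := Matrix.nonsing_inv_mul S hS'
  have hinv' : S * S⁻¹ = 1 := Matrix.mul_nonsing_inv S hS'
  have hSinvT : S⁻¹ᵀ = S⁻¹ := by rw [Matrix.transpose_nonsing_inv, hS]
  have key : ∀ A : Matrix (Fin 2) (Fin 2) ℂ,
      N * XA A - XA A * N = blk 0 (w2 * S * (-(w2 * Aᵀ * w2)) - A * (w2 * S)) 0 0 := by
    intro A
    show blk 0 (w2 * S) 0 0 * blk A 0 0 (-(w2 * Aᵀ * w2))
        - blk A 0 0 (-(w2 * Aᵀ * w2)) * blk 0 (w2 * S) 0 0 = _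
    rw [blk_mul, blk_mul, blk_sub]
    apply blk_congr <;> simp
  refine ⟨?_, ?_, ?_, dim3⟩
  · intro A
    show (blk A 0 0 (-(w2 * Aᵀ * w2)))ᵀ * J4 + J4 * blk A 0 0 (-(w2 * Aᵀ * w2)) = 0
    rw [blk_transpose, J4_blk, blk_mul, blk_mul, blk_add, ← blk_zero]
    apply blk_congr <;>
      simp [Matrix.mul_assoc, w2w2, w2w2', w2t, transpose_neg, transpose_mul,
        transpose_transpose, Matrix.mul_one]
  · intro A
    refine ⟨w2 * S * (-(w2 * Aᵀ * w2)) - A * (w2 * S), ?_, key A⟩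
    simp only [Matrix.mul_sub, transpose_sub, Matrix.mul_neg, transpose_neg,
      transpose_mul, hS, w2t, transpose_transpose, Matrix.mul_assoc, w2w2']
    abel
  · intro Y hY
    have hY' : Yᵀ * w2 = w2 * Y := by
      have := hY
      rw [transpose_mul, w2t] at this
      exact this
    refine ⟨(-(1/2 : ℂ)) • (Y * S⁻¹ * w2), ?_⟩
    rw [key]
    apply blk_congr rfl ?_ rfl rfl
    have hAT : ((-(1/2 : ℂ)) • (Y * S⁻¹ * w2))ᵀ = (-(1/2 : ℂ)) • (w2 * (S⁻¹ * Yᵀ)) := by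
      simp [transpose_smul, transpose_mul, hSinvT, w2t, Matrix.mul_assoc]
    rw [hAT]
    simp only [Matrix.mul_smul, Matrix.smul_mul, Matrix.mul_neg, Matrix.neg_mul,
      smul_neg, neg_neg, Matrix.mul_assoc, w2w2']
    rw [show S⁻¹ * (Yᵀ * w2) = S⁻¹ * (w2 * Y) by rw [hY']]
    rw [show S * (S⁻¹ * (w2 * Y)) = w2 * Y from by rw [← Matrix.mul_assoc, hinv', Matrix.one_mul]]
    rw [hinv, Matrix.mul_one, w2w2']
    module
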